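/- Let 𝒰 be a unitary system, ψ and η complete wandering vectors for 𝒰, and V the unique unitary in C_ψ(𝒰) with Vψ = η. If V² = I, then for all 0 ≤ α ≤ 2π the vector cos α · ψ + i sin α · η is a complete wandering vector for 𝒰. -/

import Mathlib

variable {H : Type*} [NormedAddCommGroup H] [InnerProductSpace ℂ H] [CompleteSpace H]

/-- `ψ` is a complete wandering vector for `𝒰`. -/
def IsCompleteWandering (𝒰 : Set (H →L[ℂ] H)) (ψ : H) : Prop :=
  Orthonormal ℂ (fun U : 𝒰 => (U : H →L[ℂ] H) ψ) ∧
    (Submodule.span ℂ ((fun U : H →L[ℂ] H => U ψ) '' 𝒰)).topologicalClosure = ⊤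

/-- Let `ψ, η` be complete wandering vectors for a unitary system `𝒰`, and `V` the unitary in
the local commutant `C_ψ(𝒰)` with `Vψ = η`.  If `V² = I`, then for all `0 ≤ α ≤ 2π` the vector
`cos α · ψ + i sin α · η` is a complete wandering vector for `𝒰`. -/
theorem stmt_7 (𝒰 : Set (H →L[ℂ] H)) (h1 : (1 : H →L[ℂ] H) ∈ 𝒰)
    (hunit : ∀ W ∈ 𝒰, W ∈ unitary (H →L[ℂ] H))
    (ψ η : H) (hψ : IsCompleteWandering 𝒰 ψ) (hη : IsCompleteWandering 𝒰 η)
    (V : H →L[ℂ] H) (hV : V ∈ unitary (H →L[ℂ] H))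
    (hVloc : ∀ U ∈ 𝒰, (V * U - U * V) ψ = 0) (hVψ : V ψ = η)
    (hV2 : V * V = 1) :
    ∀ α : ℝ, 0 ≤ α → α ≤ 2 * Real.pi →
      IsCompleteWandering 𝒰
        ((Real.cos α : ℂ) • ψ + (Complex.I * (Real.sin α : ℂ)) • η) := by
  intro α _ _
  classical
  set c : ℂ := (Real.cos α : ℂ) with hc
  set s : ℂ := Complex.I * (Real.sin α : ℂ) with hs
  set T : H →L[ℂ] H := c • 1 + s • V with hT
  set T' : H →L[ℂ] H := c • 1 - s • V with hT'
  have hVstar : star V = V := by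
    calc star V = star V * (V * V) := by rw [hV2, mul_one]
    _ = (star V * V) * V := by rw [mul_assoc]
    _ = V := by rw [hV.1, one_mul]
  have hcs : c * c - s * s = 1 := by
    have h1 : (Real.cos α : ℂ) ^ 2 + (Real.sin α : ℂ) ^ 2 = 1 := by
      exact_mod_cast congrArg (fun x : ℝ => (x : ℂ)) (Real.cos_sq_add_sin_sq α)
    rw [hc, hs]
    ring_nf
    ring_nf at h1
    rw [Complex.I_sq]
    linear_combination h1
  have hmul : T' * T = 1 := by
    rw [hT, hT']
    rw [sub_mul, mul_add, mul_add, smul_mul_smul_comm, smul_mul_smul_comm,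
      smul_mul_smul_comm, smul_mul_smul_comm, hV2, one_mul, mul_one, one_mul]
    rw [mul_comm s c]
    rw [← sub_sub, add_sub_cancel_right, ← sub_smul, hcs, one_smul]
  have hmul' : T * T' = 1 := by
    rw [hT, hT']
    rw [mul_sub, add_mul, add_mul, smul_mul_smul_comm, smul_mul_smul_comm,
      smul_mul_smul_comm, smul_mul_smul_comm, hV2, one_mul, mul_one, one_mul]
    rw [mul_comm s c]
    rw [sub_add_eq_sub_sub, add_sub_cancel_right, ← sub_smul, hcs, one_smul]
  have hstarT : star T = T' := by
    rw [hT, hT', star_add, star_smul, star_smul, star_one, hVstar]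
    have : star s = -s := by
      simp only [hs, star_mul', Complex.star_def, Complex.conj_I, Complex.conj_ofReal]
      ring
    have hcstar : star c = c := by
      simp only [hc, Complex.star_def, Complex.conj_ofReal]
    rw [this, hcstar, neg_smul, sub_eq_add_neg]
  have hstT : star T * T = 1 := by rw [hstarT]; exact hmul
  -- inner product preservation
  have hinner : ∀ x y : H, inner ℂ (T x) (T y) = (inner ℂ x y : ℂ) := by
    intro x y
    have hadj : (ContinuousLinearMap.adjoint T) (T y) = y := by
      rw [← ContinuousLinearMap.star_eq_adjoint]
      have := congrArg (fun A : H →L[ℂ] H => A y) hstT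
      simpa [ContinuousLinearMap.mul_apply] using this
    rw [← ContinuousLinearMap.adjoint_inner_right, hadj]
  -- commutation at ψ
  have hcomm : ∀ U ∈ 𝒰, U (T ψ) = T (U ψ) := by
    intro U hU
    have h := hVloc U hU
    have h' : V (U ψ) = U (V ψ) := by
      have := sub_eq_zero.mpr (rfl : (V * U) ψ = (V * U) ψ)
      have h2 : (V * U) ψ = (U * V) ψ := by
        have := hVloc U hU
        rwa [ContinuousLinearMap.sub_apply, sub_eq_zero] at this
      simpa [ContinuousLinearMap.mul_apply] using h2
    rw [hT]
    simp only [ContinuousLinearMap.add_apply, ContinuousLinearMap.smul_apply,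
      ContinuousLinearMap.one_apply, map_add, map_smul]
    rw [h']
  have hTψ : T ψ = c • ψ + s • η := by
    rw [hT]
    simp [ContinuousLinearMap.add_apply, ContinuousLinearMap.smul_apply, hVψ]
  obtain ⟨hψo, hψd⟩ := hψ
  constructor
  · -- orthonormality
    rw [orthonormal_iff_ite] at hψo ⊢
    intro i j
    rw [← hTψ, hcomm i i.2, hcomm j j.2, hinner]
    exact hψo i j
  · -- density
    set e : H ≃L[ℂ] H := ContinuousLinearEquiv.equivOfInverse T T'
      (fun x => by
        have := congrArg (fun A : H →L[ℂ] H => A x) hmul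
        simpa [ContinuousLinearMap.mul_apply] using this)
      (fun x => by
        have := congrArg (fun A : H →L[ℂ] H => A x) hmul'
        simpa [ContinuousLinearMap.mul_apply] using this) with he
    have himg : (fun U : H →L[ℂ] H => U (c • ψ + s • η)) '' 𝒰
        = T '' ((fun U : H →L[ℂ] H => U ψ) '' 𝒰) := by
      rw [Set.image_image]
      apply Set.image_congr
      intro U hU
      rw [← hTψ, hcomm U hU]
    have hspan : Submodule.span ℂ ((fun U : H →L[ℂ] H => U (c • ψ + s • η)) '' 𝒰)
        = (Submodule.span ℂ ((fun U : H →L[ℂ] H => U ψ) '' 𝒰)).map (T : H →ₗ[ℂ] H) := by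
      rw [himg, ← Submodule.span_image]
      rfl
    rw [← Submodule.dense_iff_topologicalClosure_eq_top] at hψd ⊢
    rw [hspan]
    have hset : ((Submodule.span ℂ ((fun U : H →L[ℂ] H => U ψ) '' 𝒰)).map
        (T : H →ₗ[ℂ] H) : Set H)
        = e.toHomeomorph '' (Submodule.span ℂ ((fun U : H →L[ℂ] H => U ψ) '' 𝒰) : Set H) := by
      ext x
      simp [Submodule.mem_map, Set.mem_image, he]
    rw [hset]
    rw [dense_iff_closure_eq] at hψd ⊢
    rw [← Homeomorph.image_closure, hψd, Set.image_univ]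
    exact (e.toHomeomorph).surjective.range_eq
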